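/- arXiv:2108.00531 — 2 statements merged into one kernel-verified Lean document; each statement's English description precedes it below -/
import Mathlib

section
/- Every componentwise polymatroidal monomial ideal satisfies the non-pure dual exchange property. -/
/-- A monomial in `K[x_1,...,x_n]` is identified with its exponent vector. -/
abbrev Mon (n : ℕ) := Fin n → ℕ

/-- Total degree of a monomial. -/
def degree {n : ℕ} (u : Mon n) : ℕ := ∑ i, u i

/-- A monomial ideal is identified with the set of exponent vectors of the monomials it
contains; this set is closed under multiplication by monomials. -/
def IsMonomialIdeal {n : ℕ} (I : Set (Mon n)) : Prop :=
  ∀ u ∈ I, ∀ w : Mon n, u + w ∈ I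

/-- The minimal monomial generating set `G(I)` of a monomial ideal: monomials of `I`
minimal with respect to divisibility (pointwise `≤` of exponent vectors). -/
def minGens {n : ℕ} (I : Set (Mon n)) : Set (Mon n) :=
  {u | u ∈ I ∧ ∀ v ∈ I, v ≤ u → v = u}

/-- `exch v i j` is the exponent vector of `x_j * (v / x_i)` (for `i ≠ j`). -/
def exch {n : ℕ} (v : Mon n) (i j : Fin n) : Mon n :=
  fun k => if k = i then v k - 1 else if k = j then v k + 1 else v k

/-- `component I d` is the ideal `I_⟨d⟩` generated by the degree-`d` monomials of `I`. -/
def component {n : ℕ} (I : Set (Mon n)) (d : ℕ) : Set (Mon n) :=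
  {w | ∃ u ∈ I, degree u = d ∧ u ≤ w}

/-- `I` is generated in a single degree. -/
def GeneratedInSingleDegree {n : ℕ} (I : Set (Mon n)) : Prop :=
  ∃ d, ∀ u ∈ minGens I, degree u = d

/-- A polymatroidal ideal: generated in a single degree and its generators satisfy the
exchange property. -/
def IsPolymatroidal {n : ℕ} (I : Set (Mon n)) : Prop :=
  GeneratedInSingleDegree I ∧
  ∀ u ∈ minGens I, ∀ v ∈ minGens I, ∀ i : Fin n, v i < u i →
    ∃ j : Fin n, u j < v j ∧ exch u i j ∈ I

/-- Componentwise polymatroidal: each graded component ideal `I_⟨d⟩` is polymatroidal. -/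
def ComponentwisePolymatroidal {n : ℕ} (I : Set (Mon n)) : Prop :=
  ∀ d : ℕ, IsPolymatroidal (component I d)

/-- Non-pure dual exchange property: for `u, v ∈ G(I)` with `deg u ≤ deg v` and
`deg_{x_i} v < deg_{x_i} u` there is `j` with `deg_{x_j} v > deg_{x_j} u` and
`x_i * (v / x_j) ∈ I`. -/
def NonPureDualExchange {n : ℕ} (I : Set (Mon n)) : Prop :=
  ∀ u ∈ minGens I, ∀ v ∈ minGens I, degree u ≤ degree v →
    ∀ i : Fin n, v i < u i → ∃ j : Fin n, u j < v j ∧ exch v j i ∈ I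

/-- Non-pure exchange property: for `u, v ∈ G(I)` with `deg u ≤ deg v` and
`deg_{x_i} v > deg_{x_i} u` there is `j` with `deg_{x_j} v < deg_{x_j} u` and
`x_j * (v / x_i) ∈ I`. -/
def NonPureExchange {n : ℕ} (I : Set (Mon n)) : Prop :=
  ∀ u ∈ minGens I, ∀ v ∈ minGens I, degree u ≤ degree v →
    ∀ i : Fin n, u i < v i → ∃ j : Fin n, v j < u j ∧ exch v i j ∈ I

/-- The monomial ideal generated by a set `G` of monomials. -/
def genBy {n : ℕ} (G : Set (Mon n)) : Set (Mon n) := {w | ∃ u ∈ G, u ≤ w}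

/-- The product of two monomial ideals (as sets of monomials). -/
def mulIdeal {n : ℕ} (I J : Set (Mon n)) : Set (Mon n) :=
  {w | ∃ u ∈ I, ∃ v ∈ J, w = u + v}

/-- The product of a monomial ideal with the monomial `u`. -/
def mulMon {n : ℕ} (u : Mon n) (I : Set (Mon n)) : Set (Mon n) :=
  (fun v => u + v) '' I

/-- Strong exchange property: for all generators `u, v` and all `i, j` with
`deg_{x_i} u > deg_{x_i} v` and `deg_{x_j} u < deg_{x_j} v`, `x_j * (u / x_i) ∈ I`. -/
def StrongExchange {n : ℕ} (I : Set (Mon n)) : Prop :=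
  ∀ u ∈ minGens I, ∀ v ∈ minGens I, ∀ i j : Fin n,
    v i < u i → u j < v j → exch u i j ∈ I

/-- The Veronese type ideal `I_{(d; a_1,...,a_n)}`: generated by all monomials of
degree `d` with `deg_{x_i} ≤ a i` for all `i`. -/
def veronese (n d : ℕ) (a : Fin n → ℕ) : Set (Mon n) :=
  {w | ∃ u : Mon n, degree u = d ∧ (∀ i, u i ≤ a i) ∧ u ≤ w}

/-- A list of monomials is an admissible order if each colon ideal
`(u_1,...,u_{i-1}) : u_i` is generated by a subset `S` of the variables. -/
def AdmissibleOrder {n : ℕ} (L : List (Mon n)) : Prop :=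
  ∀ i : Fin L.length, ∃ S : Set (Fin n),
    ∀ w : Mon n, (w + L.get i ∈ genBy {u | u ∈ L.take i.1}) ↔ ∃ k ∈ S, 1 ≤ w k

/-- `I` has linear quotients: some ordering of `G(I)` is admissible. -/
def HasLinearQuotients {n : ℕ} (I : Set (Mon n)) : Prop :=
  ∃ L : List (Mon n), L.Nodup ∧ (∀ u, u ∈ L ↔ u ∈ minGens I) ∧ AdmissibleOrder L

/-- `I` can be extended by linear quotients to `J`: `G(I) ⊆ G(J)` and the elements of
`G(J) \ G(I)` can be ordered `v_1,...,v_m` such that each colon ideal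
`(G(I), v_1,...,v_i) : v_{i+1}` is generated by a subset of the variables. -/
def ExtendsByLinearQuotients {n : ℕ} (I J : Set (Mon n)) : Prop :=
  I ⊆ J ∧ minGens I ⊆ minGens J ∧
  ∃ L : List (Mon n), L.Nodup ∧ (∀ u, u ∈ L ↔ u ∈ minGens J ∧ u ∉ minGens I) ∧
    ∀ i : Fin L.length, ∃ S : Set (Fin n),
      ∀ w : Mon n,
        (w + L.get i ∈ genBy (minGens I ∪ {u | u ∈ L.take i.1})) ↔ ∃ k ∈ S, 1 ≤ w k

/-- The minimal generators of `I ⊆ K[x,y]` are `u_i = x^{a i} y^{b i}`, `i = 0,...,m`,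
with `a` strictly decreasing, `b` strictly increasing, `a m = 0` and `b 0 = 0`
(so `I` is `(x,y)`-primary). -/
def yxTightGens (m : ℕ) (a b : ℕ → ℕ) (I : Set (Mon 2)) : Prop :=
  (∀ i k : ℕ, i ≤ m → k ≤ m → i < k → a k < a i ∧ b i < b k) ∧
  a m = 0 ∧ b 0 = 0 ∧
  minGens I = {u | ∃ i ≤ m, u = ![a i, b i]}

/-- `I` is `x`-tight in `[0, r]`: the `x`-exponents of the generators are exactly
`r, r-1, ..., 1, 0` (i.e. `a (r - i) = i`). -/
def xTight (I : Set (Mon 2)) (r : ℕ) : Prop :=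
  ∃ b : ℕ → ℕ, yxTightGens r (fun i => r - i) b I

/-- `I` is `y`-tight in `[0, s]`: the `y`-exponents of the generators are exactly
`0, 1, ..., s`. -/
def yTight (I : Set (Mon 2)) (s : ℕ) : Prop :=
  ∃ a : ℕ → ℕ, yxTightGens s a (fun i => i) I

/-- `I` is `yx`-tight: there is `0 ≤ j ≤ m` with `b i = i` for `i = 0,...,j` and
`a (m - i) = i` for `i = 0,...,m-j`. -/
def yxTight (I : Set (Mon 2)) : Prop :=
  ∃ (m : ℕ) (a b : ℕ → ℕ), yxTightGens m a b I ∧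
    ∃ j ≤ m, (∀ i ≤ j, b i = i) ∧ ∀ i ≤ m - j, a (m - i) = i

/-- Powers of a monomial ideal. -/
def powIdeal {n : ℕ} (I : Set (Mon n)) : ℕ → Set (Mon n)
  | 0 => Set.univ
  | k + 1 => mulIdeal (powIdeal I k) I

section Aux

lemma degree_mono {n : ℕ} {u w : Mon n} (h : u ≤ w) : degree u ≤ degree w :=
  Finset.sum_le_sum fun k _ => h k

lemma eq_of_le_of_degree_le {n : ℕ} {u w : Mon n} (h : u ≤ w) (hd : degree w ≤ degree u) :
    u = w := by
  by_contra hne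
  have hex : ∃ k, u k < w k := by
    by_contra hall
    push_neg at hall
    exact hne (funext fun k => le_antisymm (h k) (hall k))
  obtain ⟨k, hk⟩ := hex
  have : degree u < degree w :=
    Finset.sum_lt_sum (fun k _ => h k) ⟨k, Finset.mem_univ k, hk⟩
  omega

lemma degree_exch {n : ℕ} {u : Mon n} {i j : Fin n} (hij : i ≠ j) (hu : 1 ≤ u i) :
    degree (exch u i j) = degree u := by
  have key : ∀ k, exch u i j k + (if k = i then 1 else 0) = u k + (if k = j then 1 else 0) := by
    intro k
    unfold exch
    rcases eq_or_ne k i with rfl | hki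
    · rw [if_pos rfl, if_pos rfl, if_neg hij]
      omega
    · rw [if_neg hki, if_neg hki]
      rcases eq_or_ne k j with rfl | hkj
      · rw [if_pos rfl, if_pos rfl]
      · rw [if_neg hkj, if_neg hkj]
  have hsum : (∑ k, (exch u i j k + if k = i then 1 else 0))
      = ∑ k, (u k + if k = j then 1 else 0) :=
    Finset.sum_congr rfl fun k _ => key k
  rw [Finset.sum_add_distrib, Finset.sum_add_distrib] at hsum
  simp only [Finset.sum_ite_eq', Finset.mem_univ, if_true] at hsum
  unfold degree
  omega

/-- The "base set": elements of `component I d` of degree `d`. -/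
def Bset {n : ℕ} (I : Set (Mon n)) (d : ℕ) : Set (Mon n) :=
  {w | w ∈ component I d ∧ degree w = d}

lemma le_degree_of_mem_component {n : ℕ} {I : Set (Mon n)} {d : ℕ} {w : Mon n}
    (hw : w ∈ component I d) : d ≤ degree w := by
  obtain ⟨x, _, hxd, hxw⟩ := hw
  have := degree_mono hxw
  omega

lemma minGens_component {n : ℕ} (I : Set (Mon n)) (d : ℕ) :
    minGens (component I d) = Bset I d := by
  ext w
  constructor
  · rintro ⟨hw, hmin⟩
    obtain ⟨x, hxI, hxd, hxw⟩ := hw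
    have hxc : x ∈ component I d := ⟨x, hxI, hxd, le_refl x⟩
    have hxeq : x = w := hmin x hxc hxw
    exact ⟨⟨x, hxI, hxd, hxw⟩, hxeq ▸ hxd⟩
  · rintro ⟨hw, hwd⟩
    refine ⟨hw, fun v hv hvw => ?_⟩
    have h1 : d ≤ degree v := le_degree_of_mem_component hv
    exact eq_of_le_of_degree_le hvw (by omega)

/-- Symmetric (dual) exchange for abstract base sets, by induction on the distance. -/
lemma symExch {n : ℕ} (B : Set (Mon n)) (d : ℕ)
    (hdeg : ∀ u ∈ B, degree u = d)
    (hEx : ∀ u ∈ B, ∀ v ∈ B, ∀ i : Fin n, v i < u i → ∃ j, u j < v j ∧ exch u i j ∈ B) :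
    ∀ N : ℕ, ∀ u ∈ B, ∀ v ∈ B, (∑ k, (u k - v k)) ≤ N →
      ∀ i : Fin n, v i < u i → ∃ j, u j < v j ∧ exch v j i ∈ B := by
  intro N
  induction N with
  | zero =>
    intro u hu v hv hN i hi
    have hle : u i - v i ≤ ∑ k, (u k - v k) :=
      Finset.single_le_sum (f := fun k => u k - v k) (fun k _ => Nat.zero_le _) (Finset.mem_univ i)
    omega
  | succ N ih =>
    intro u hu v hv hN i hi
    have hterm : u i - v i ≤ ∑ k, (u k - v k) :=
      Finset.single_le_sum (f := fun k => u k - v k) (fun k _ => Nat.zero_le _) (Finset.mem_univ i)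
    -- sums of truncated differences agree since degrees agree
    have hdu : degree u = d := hdeg u hu
    have hdv : degree v = d := hdeg v hv
    have hsums : ∑ k, (v k - u k) = ∑ k, (u k - v k) := by
      have hptw : ∑ k, (u k + (v k - u k)) = ∑ k, (v k + (u k - v k)) :=
        Finset.sum_congr rfl fun k _ => by omega
      rw [Finset.sum_add_distrib, Finset.sum_add_distrib] at hptw
      unfold degree at hdu hdv
      omega
    by_cases hbase : ∑ k, (u k - v k) ≤ 1
    · -- base case: u = exch v j i for the unique j
      have hsum1 : ∑ k, (u k - v k) = 1 := by omega
      have herase : (u i - v i) + ∑ k ∈ Finset.univ.erase i, (u k - v k)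
          = ∑ k, (u k - v k) := Finset.add_sum_erase _ (fun k => u k - v k) (Finset.mem_univ i)
      have herz : ∑ k ∈ Finset.univ.erase i, (u k - v k) = 0 := by omega
      have hother : ∀ k, k ≠ i → u k ≤ v k := by
        intro k hk
        have := Finset.sum_eq_zero_iff.mp herz k (Finset.mem_erase.mpr ⟨hk, Finset.mem_univ k⟩)
        omega
      have hvsum : ∑ k, (v k - u k) = 1 := by omega
      have hjex : ∃ j ∈ Finset.univ, v j - u j ≠ 0 := by
        apply Finset.exists_ne_zero_of_sum_ne_zero
        omega
      obtain ⟨j, -, hj0⟩ := hjex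
      have hj : u j < v j := by omega
      have hji : j ≠ i := by rintro rfl; omega
      have hjterm : v j - u j ≤ ∑ k, (v k - u k) :=
        Finset.single_le_sum (f := fun k => v k - u k) (fun k _ => Nat.zero_le _) (Finset.mem_univ j)
      have herase2 : (v j - u j) + ∑ k ∈ Finset.univ.erase j, (v k - u k)
          = ∑ k, (v k - u k) := Finset.add_sum_erase _ (fun k => v k - u k) (Finset.mem_univ j)
      have herz2 : ∑ k ∈ Finset.univ.erase j, (v k - u k) = 0 := by omega
      have hother2 : ∀ k, k ≠ j → v k ≤ u k := by
        intro k hk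
        have := Finset.sum_eq_zero_iff.mp herz2 k (Finset.mem_erase.mpr ⟨hk, Finset.mem_univ k⟩)
        omega
      have huv : exch v j i = u := by
        funext k
        unfold exch
        rcases eq_or_ne k j with rfl | hkj
        · rw [if_pos rfl]
          have h1 := hother k hji
          omega
        · rw [if_neg hkj]
          rcases eq_or_ne k i with rfl | hki
          · rw [if_pos rfl]
            omega
          · rw [if_neg hki]
            have h1 := hother k hki
            have h2 := hother2 k hkj
            omega
      exact ⟨j, hj, huv ▸ hu⟩
    · -- inductive step
      -- pick a coordinate i' where an exchange on u keeps u i > v i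
      have hi'ex : ∃ i' : Fin n, v i' < u i' ∧ (i' = i → v i + 2 ≤ u i) := by
        by_cases hcase : v i + 2 ≤ u i
        · exact ⟨i, hi, fun _ => hcase⟩
        · have herase : (u i - v i) + ∑ k ∈ Finset.univ.erase i, (u k - v k)
              = ∑ k, (u k - v k) := Finset.add_sum_erase _ (fun k => u k - v k) (Finset.mem_univ i)
          have hne : ∑ k ∈ Finset.univ.erase i, (u k - v k) ≠ 0 := by omega
          obtain ⟨i', hmem, hne0⟩ := Finset.exists_ne_zero_of_sum_ne_zero hne
          have hii : i' ≠ i := Finset.ne_of_mem_erase hmem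
          exact ⟨i', by omega, fun h => absurd h hii⟩
      obtain ⟨i', hi'v, hi'i⟩ := hi'ex
      obtain ⟨j', hj', hu''B⟩ := hEx u hu v hv i' hi'v
      set u'' : Mon n := exch u i' j' with hu''def
      have hij' : i' ≠ j' := by rintro rfl; omega
      have hj'i : j' ≠ i := by rintro rfl; omega
      have hu''i' : u'' i' = u i' - 1 := by
        simp [hu''def, exch]
      have hu''j' : u'' j' = u j' + 1 := by
        simp [hu''def, exch, Ne.symm hij']
      have hu''other : ∀ k, k ≠ i' → k ≠ j' → u'' k = u k := by
        intro k h1 h2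
        simp only [hu''def, exch, if_neg h1, if_neg h2]
      have hu''i : v i < u'' i := by
        rcases eq_or_ne i i' with rfl | hii'
        · have := hi'i rfl
          omega
        · rw [hu''other i hii' (Ne.symm hj'i)]
          exact hi
      -- the distance decreases
      have hkey : ∀ k, k ≠ i' → u'' k - v k = u k - v k := by
        intro k hk
        rcases eq_or_ne k j' with rfl | hkj
        · omega
        · rw [hu''other k hk hkj]
      have he1 : (u'' i' - v i') + ∑ k ∈ Finset.univ.erase i', (u'' k - v k)
          = ∑ k, (u'' k - v k) := Finset.add_sum_erase _ (fun k => u'' k - v k) (Finset.mem_univ i')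
      have he2 : (u i' - v i') + ∑ k ∈ Finset.univ.erase i', (u k - v k)
          = ∑ k, (u k - v k) := Finset.add_sum_erase _ (fun k => u k - v k) (Finset.mem_univ i')
      have hecong : ∑ k ∈ Finset.univ.erase i', (u'' k - v k)
          = ∑ k ∈ Finset.univ.erase i', (u k - v k) :=
        Finset.sum_congr rfl fun k hk => hkey k (Finset.ne_of_mem_erase hk)
      have hmeas : ∑ k, (u'' k - v k) ≤ N := by omega
      obtain ⟨j, hj1, hj2⟩ := ih u'' hu''B v hv hmeas i hu''i
      refine ⟨j, ?_, hj2⟩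
      have hjne : j ≠ i' := by
        rintro rfl
        omega
      rcases eq_or_ne j j' with rfl | hjj
      · omega
      · rw [hu''other j hjne hjj] at hj1
        exact hj1

end Aux

/-- componentwise polymatroidal ideals satisfy the non-pure dual exchange
property. -/
theorem stmt_2 {n : ℕ} (I : Set (Mon n)) (hI : IsMonomialIdeal I)
    (hcp : ComponentwisePolymatroidal I) :
    NonPureDualExchange I := by
  intro u hu v hv hduv i hi
  set d := degree v with hd
  -- the exchange property on Bset I d
  have hExB : ∀ a ∈ Bset I d, ∀ b ∈ Bset I d, ∀ i : Fin n, b i < a i →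
      ∃ j, a j < b j ∧ exch a i j ∈ Bset I d := by
    intro a ha b hb i' hba
    have ha' : a ∈ minGens (component I d) := by rw [minGens_component]; exact ha
    have hb' : b ∈ minGens (component I d) := by rw [minGens_component]; exact hb
    obtain ⟨j, hj1, hj2⟩ := (hcp d).2 a ha' b hb' i' hba
    have hij : i' ≠ j := by rintro rfl; omega
    have hdeg : degree (exch a i' j) = d := by
      rw [degree_exch hij (by omega)]
      exact ha.2
    exact ⟨j, hj1, hj2, hdeg⟩
  have hdegB : ∀ w ∈ Bset I d, degree w = d := fun w hw => hw.2
  -- v is in the base set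
  have hvB : v ∈ Bset I d := ⟨⟨v, hv.1, rfl, le_refl v⟩, rfl⟩
  -- pad u to a degree-d element u' with u' i large
  set w : Mon n := fun k => if k = i then d - degree u else 0 with hw
  set u' : Mon n := u + w with hu'
  have hu'I : u' ∈ I := hI u hu.1 w
  have hdu' : degree u' = d := by
    have : degree u' = degree u + ∑ k, w k := by
      unfold degree
      rw [← Finset.sum_add_distrib]
      exact Finset.sum_congr rfl fun k _ => rfl
    rw [this, hw]
    simp only [Finset.sum_ite_eq', Finset.mem_univ, if_true]
    omega
  have hu'B : u' ∈ Bset I d := ⟨⟨u', hu'I, hdu', le_refl u'⟩, hdu'⟩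
  have hu'i : v i < u' i := by
    have : u i ≤ u' i := Nat.le_add_right _ _
    omega
  obtain ⟨j, hj1, hj2⟩ :=
    symExch (Bset I d) d hdegB hExB (∑ k, (u' k - v k)) u' hu'B v hvB le_rfl i hu'i
  refine ⟨j, ?_, ?_⟩
  · have : u j ≤ u' j := Nat.le_add_right _ _
    omega
  · obtain ⟨⟨x, hxI, hxd, hxle⟩, -⟩ := hj2
    have hrw : exch v j i = x + fun k => exch v j i k - x k := by
      funext k
      have h1 := hxle k
      show exch v j i k = x k + (exch v j i k - x k)
      exact (Nat.add_sub_cancel' h1).symm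
    rw [hrw]
    exact hI x hxI _
end

section
/- The product of two yx-tight ideals in K[x,y] is again a yx-tight ideal. -/
lemma vec_le {x y : ℕ} {w : Mon 2} : (![x, y] : Mon 2) ≤ w ↔ x ≤ w 0 ∧ y ≤ w 1 := by
  constructor
  · intro h; exact ⟨h 0, h 1⟩
  · rintro ⟨h0, h1⟩ i
    fin_cases i
    · simpa using h0
    · simpa using h1

lemma vec_le_vec {x y x' y' : ℕ} : (![x, y] : Mon 2) ≤ ![x', y'] ↔ x ≤ x' ∧ y ≤ y' := by
  rw [vec_le]; simp

lemma vec_add (x y x' y' : ℕ) : (![x, y] + ![x', y'] : Mon 2) = ![x + x', y + y'] := by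
  funext i; fin_cases i <;> simp

lemma degree_lt {n : ℕ} {u w : Mon n} (h : u ≤ w) (hne : u ≠ w) : degree u < degree w := by
  obtain ⟨i, hi⟩ : ∃ i, u i ≠ w i := by
    by_contra hc; push_neg at hc; exact hne (funext hc)
  exact Finset.sum_lt_sum (fun i _ => h i) ⟨i, Finset.mem_univ i, lt_of_le_of_ne (h i) hi⟩

lemma exists_minGen_aux {n : ℕ} {I : Set (Mon n)} :
    ∀ d, ∀ w ∈ I, degree w ≤ d → ∃ g ∈ minGens I, g ≤ w := by
  intro d
  induction d with
  | zero =>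
    intro w hw hd
    refine ⟨w, ⟨hw, ?_⟩, le_refl w⟩
    intro v hv hvw
    by_contra hne
    have := degree_lt hvw hne; omega
  | succ d ih =>
    intro w hw hd
    by_cases hmin : ∀ v ∈ I, v ≤ w → v = w
    · exact ⟨w, ⟨hw, hmin⟩, le_refl w⟩
    · push_neg at hmin
      obtain ⟨v, hv, hvw, hne⟩ := hmin
      have hlt := degree_lt hvw hne
      obtain ⟨g, hg, hgv⟩ := ih v hv (by omega)
      exact ⟨g, hg, hgv.trans hvw⟩

lemma exists_minGen {n : ℕ} {I : Set (Mon n)} {w : Mon n} (hw : w ∈ I) :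
    ∃ g ∈ minGens I, g ≤ w := exists_minGen_aux (degree w) w hw le_rfl

lemma minGens_eq {n : ℕ} {P S : Set (Mon n)} (hSP : S ⊆ P)
    (hcov : ∀ w ∈ P, ∃ g ∈ S, g ≤ w)
    (hanti : ∀ g ∈ S, ∀ g' ∈ S, g ≤ g' → g = g') : minGens P = S := by
  ext u
  constructor
  · rintro ⟨hu, hmin⟩
    obtain ⟨g, hg, hgu⟩ := hcov u hu
    have := hmin g (hSP hg) hgu
    rwa [← this]
  · intro hu
    refine ⟨hSP hu, ?_⟩
    intro v hv hvu
    obtain ⟨g, hg, hgv⟩ := hcov v hv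
    have heq := hanti g hg u hu (hgv.trans hvu)
    subst heq
    exact le_antisymm hvu hgv

lemma step_mono {m : ℕ} {f : ℕ → ℕ} (h : ∀ i k : ℕ, i ≤ m → k ≤ m → i < k → f i < f k)
    {i k : ℕ} (hik : i ≤ k) (hk : k ≤ m) : f i + (k - i) ≤ f k := by
  induction k, hik using Nat.le_induction with
  | base => simp
  | succ k hik ih =>
    have h1 := h k (k+1) (by omega) hk (by omega)
    have h2 := ih (by omega)
    omega

lemma step_anti {m : ℕ} {f : ℕ → ℕ} (h : ∀ i k : ℕ, i ≤ m → k ≤ m → i < k → f k < f i)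
    {i k : ℕ} (hik : i ≤ k) (hk : k ≤ m) : f k + (k - i) ≤ f i := by
  induction k, hik using Nat.le_induction with
  | base => simp
  | succ k hik ih =>
    have h1 := h k (k+1) (by omega) hk (by omega)
    have h2 := ih (by omega)
    omega

noncomputable def infA (a a' : ℕ → ℕ) (j j' t : ℕ) : ℕ :=
  sInf {x | ∃ i k, i ≤ j ∧ k ≤ j' ∧ i + k = t ∧ x = a i + a' k}

lemma infA_le {a a' : ℕ → ℕ} {j j' t i k : ℕ} (hi : i ≤ j) (hk : k ≤ j')
    (hik : i + k = t) : infA a a' j j' t ≤ a i + a' k :=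
  Nat.sInf_le ⟨i, k, hi, hk, hik, rfl⟩

lemma infA_mem {a a' : ℕ → ℕ} {j j' t : ℕ} (ht : t ≤ j + j') :
    ∃ i k, i ≤ j ∧ k ≤ j' ∧ i + k = t ∧ infA a a' j j' t = a i + a' k := by
  have hne : {x | ∃ i k, i ≤ j ∧ k ≤ j' ∧ i + k = t ∧ x = a i + a' k}.Nonempty :=
    ⟨a (min j t) + a' (t - min j t), min j t, t - min j t, by omega, by omega, by omega, rfl⟩
  exact Nat.sInf_mem hne

noncomputable def infC (b b' : ℕ → ℕ) (j m j' m' t : ℕ) : ℕ :=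
  sInf {x | ∃ i k, j ≤ i ∧ i ≤ m ∧ j' ≤ k ∧ k ≤ m' ∧ i + k = t ∧ x = b i + b' k}

lemma infC_le {b b' : ℕ → ℕ} {j m j' m' t i k : ℕ} (hji : j ≤ i) (him : i ≤ m)
    (hjk : j' ≤ k) (hkm : k ≤ m') (hik : i + k = t) :
    infC b b' j m j' m' t ≤ b i + b' k :=
  Nat.sInf_le ⟨i, k, hji, him, hjk, hkm, hik, rfl⟩

lemma infC_mem {b b' : ℕ → ℕ} {j m j' m' t : ℕ} (hjm : j ≤ m) (hjm' : j' ≤ m')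
    (ht1 : j + j' ≤ t) (ht2 : t ≤ m + m') :
    ∃ i k, j ≤ i ∧ i ≤ m ∧ j' ≤ k ∧ k ≤ m' ∧ i + k = t ∧
      infC b b' j m j' m' t = b i + b' k := by
  have hne : {x | ∃ i k, j ≤ i ∧ i ≤ m ∧ j' ≤ k ∧ k ≤ m' ∧ i + k = t ∧ x = b i + b' k}.Nonempty :=
    ⟨b (max j (t - m')) + b' (t - max j (t - m')), max j (t - m'), t - max j (t - m'),
      by omega, by omega, by omega, by omega, by omega, rfl⟩
  exact Nat.sInf_mem hne


/-- the product of two `yx`-tight ideals in `K[x,y]` is `yx`-tight. -/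
theorem stmt_11 (I J : Set (Mon 2)) (hI : IsMonomialIdeal I) (hJ : IsMonomialIdeal J)
    (hxI : yxTight I) (hxJ : yxTight J) :
    yxTight (mulIdeal I J) := by
  obtain ⟨m, a, b, ⟨hmono, ham, hb0, hgens⟩, j, hjm, hbj, haj⟩ := hxI
  obtain ⟨m', a', b', ⟨hmono', ham', hb0', hgens'⟩, j', hjm', hbj', haj'⟩ := hxJ
  -- basic derived facts
  have hb_step : ∀ i k : ℕ, i ≤ k → k ≤ m → b i + (k - i) ≤ b k :=
    fun i k hik hk => step_mono (fun i k him hkm h => (hmono i k him hkm h).2) hik hk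
  have ha_step : ∀ i k : ℕ, i ≤ k → k ≤ m → a k + (k - i) ≤ a i :=
    fun i k hik hk => step_anti (fun i k him hkm h => (hmono i k him hkm h).1) hik hk
  have hb'_step : ∀ i k : ℕ, i ≤ k → k ≤ m' → b' i + (k - i) ≤ b' k :=
    fun i k hik hk => step_mono (fun i k him hkm h => (hmono' i k him hkm h).2) hik hk
  have ha'_step : ∀ i k : ℕ, i ≤ k → k ≤ m' → a' k + (k - i) ≤ a' i :=
    fun i k hik hk => step_anti (fun i k him hkm h => (hmono' i k him hkm h).1) hik hk
  have hb_ge : ∀ i, i ≤ m → i ≤ b i := fun i hi => by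
    have := hb_step 0 i (by omega) hi; omega
  have hb'_ge : ∀ i, i ≤ m' → i ≤ b' i := fun i hi => by
    have := hb'_step 0 i (by omega) hi; omega
  have ha_ge : ∀ i, i ≤ m → m - i ≤ a i := fun i hi => by
    have := ha_step i m hi le_rfl; omega
  have ha'_ge : ∀ i, i ≤ m' → m' - i ≤ a' i := fun i hi => by
    have := ha'_step i m' hi le_rfl; omega
  have ha_hi : ∀ i, j ≤ i → i ≤ m → a i = m - i := fun i hji him => by
    have h1 := haj (m - i) (by omega)
    have h2 : m - (m - i) = i := by omega
    rw [h2] at h1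
    omega
  have ha'_hi : ∀ i, j' ≤ i → i ≤ m' → a' i = m' - i := fun i hji him => by
    have h1 := haj' (m' - i) (by omega)
    have h2 : m' - (m' - i) = i := by omega
    rw [h2] at h1
    omega
  -- abbreviations (spelled out)
  -- A t = infA a a' j j' t ; C t = infC b b' j m j' m' t
  have hA_ge : ∀ t, t ≤ j + j' → (m + m') - t ≤ infA a a' j j' t := by
    intro t ht
    obtain ⟨i, k, hi, hk, hik, hval⟩ := infA_mem (a := a) (a' := a') ht
    have h1 := ha_ge i (by omega)
    have h2 := ha'_ge k (by omega)
    omega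
  have hA_end : infA a a' j j' (j + j') = (m - j) + (m' - j') := by
    have h1 : infA a a' j j' (j + j') ≤ a j + a' j' := infA_le le_rfl le_rfl rfl
    have h2 := hA_ge (j + j') le_rfl
    have h3 := ha_hi j le_rfl hjm
    have h4 := ha'_hi j' le_rfl hjm'
    omega
  have hC_ge : ∀ t, j + j' ≤ t → t ≤ m + m' → t ≤ infC b b' j m j' m' t := by
    intro t ht1 ht2
    obtain ⟨i, k, hji, him, hjk, hkm, hik, hval⟩ := infC_mem (b := b) (b' := b') hjm hjm' ht1 ht2
    have h1 := hb_ge i him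
    have h2 := hb'_ge k hkm
    omega
  have hC_start : infC b b' j m j' m' (j + j') = j + j' := by
    have h1 : infC b b' j m j' m' (j + j') ≤ b j + b' j' :=
      infC_le le_rfl hjm le_rfl hjm' rfl
    have h2 := hC_ge (j + j') le_rfl (by omega)
    have h3 := hbj j le_rfl
    have h4 := hbj' j' le_rfl
    omega
  have hAstep1 : ∀ t, t < j + j' → infA a a' j j' (t + 1) + 1 ≤ infA a a' j j' t := by
    intro t ht
    obtain ⟨i, k, hi, hk, hik, hval⟩ := infA_mem (a := a) (a' := a') (le_of_lt ht)
    rcases lt_or_eq_of_le hi with hij | hij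
    · have h1 : infA a a' j j' (t + 1) ≤ a (i + 1) + a' k :=
        infA_le (by omega) hk (by omega)
      have h2 := (hmono i (i + 1) (by omega) (by omega) (by omega)).1
      omega
    · have hkj : k < j' := by omega
      have h1 : infA a a' j j' (t + 1) ≤ a i + a' (k + 1) :=
        infA_le hi (by omega) (by omega)
      have h2 := (hmono' k (k + 1) (by omega) (by omega) (by omega)).1
      omega
  have hAstep : ∀ t s, t ≤ s → s ≤ j + j' →
      infA a a' j j' s + (s - t) ≤ infA a a' j j' t := by
    intro t s hts hs
    induction s, hts using Nat.le_induction with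
    | base => simp
    | succ s hts ih =>
      have h1 := hAstep1 s (by omega)
      have h2 := ih (by omega)
      omega
  have hCstep1 : ∀ t, j + j' ≤ t → t < m + m' →
      infC b b' j m j' m' t + 1 ≤ infC b b' j m j' m' (t + 1) := by
    intro t ht1 ht2
    obtain ⟨i, k, hji, him, hjk, hkm, hik, hval⟩ :=
      infC_mem (b := b) (b' := b') hjm hjm' (t := t + 1) (by omega) (by omega)
    rcases lt_or_eq_of_le hji with hij | hij
    · have h1 : infC b b' j m j' m' t ≤ b (i - 1) + b' k :=
        infC_le (by omega) (by omega) hjk hkm (by omega)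
      have h2 := (hmono (i - 1) i (by omega) him (by omega)).2
      omega
    · have hkj : j' < k := by omega
      have h1 : infC b b' j m j' m' t ≤ b i + b' (k - 1) :=
        infC_le hji him (by omega) (by omega) (by omega)
      have h2 := (hmono' (k - 1) k (by omega) hkm (by omega)).2
      omega
  have hCstep : ∀ t s, j + j' ≤ t → t ≤ s → s ≤ m + m' →
      infC b b' j m j' m' t + (s - t) ≤ infC b b' j m j' m' s := by
    intro t s ht hts hs
    induction s, hts using Nat.le_induction with
    | base => simp
    | succ s hts ih =>
      have h1 := hCstep1 s (by omega) (by omega)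
      have h2 := ih (by omega)
      omega
  -- the generators of the product
  refine ⟨m + m',
    (fun t => if t < j + j' then infA a a' j j' t else (m + m') - t),
    (fun t => if t < j + j' then t else infC b b' j m j' m' t), ?_, ?_⟩
  case refine_2 =>
    refine ⟨j + j', by omega, ?_, ?_⟩
    · intro i hi
      by_cases h : i < j + j'
      · simp [h]
      · have : i = j + j' := by omega
        subst this
        simpa using hC_start
    · intro i hi
      have h : ¬ (m + m' - i < j + j') := by omega
      simp only [h, if_false]
      omega
  -- now yxTightGens
  have ha''lo : ∀ t, t ≤ j + j' →
      (if t < j + j' then infA a a' j j' t else (m + m') - t) = infA a a' j j' t := by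
    intro t ht
    by_cases h : t < j + j'
    · simp [h]
    · have : t = j + j' := by omega
      subst this
      simp only [lt_irrefl, if_false]
      rw [hA_end]; omega
  have ha''hi : ∀ t, j + j' ≤ t →
      (if t < j + j' then infA a a' j j' t else (m + m') - t) = (m + m') - t := by
    intro t ht
    simp [Nat.not_lt.mpr ht]
  have hb''lo : ∀ t, t ≤ j + j' →
      (if t < j + j' then t else infC b b' j m j' m' t) = t := by
    intro t ht
    by_cases h : t < j + j'
    · simp [h]
    · have : t = j + j' := by omega
      subst this
      simpa using hC_start
  have hb''hi : ∀ t, j + j' ≤ t →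
      (if t < j + j' then t else infC b b' j m j' m' t) = infC b b' j m j' m' t := by
    intro t ht
    simp [Nat.not_lt.mpr ht]
  have hmono'' : ∀ t s : ℕ, t ≤ m + m' → s ≤ m + m' → t < s →
      (if s < j + j' then infA a a' j j' s else (m + m') - s) <
        (if t < j + j' then infA a a' j j' t else (m + m') - t) ∧
      (if t < j + j' then t else infC b b' j m j' m' t) <
        (if s < j + j' then s else infC b b' j m j' m' s) := by
    intro t s htm hsm hts
    constructor
    · rcases le_or_gt s (j + j') with hs | hs
      · rw [ha''lo t (by omega), ha''lo s hs]
        have := hAstep t s (by omega) hs; omega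
      · rw [ha''hi s (by omega)]
        rcases le_or_gt (j + j') t with ht | ht
        · rw [ha''hi t ht]; omega
        · rw [ha''lo t (by omega)]
          have h1 := hAstep t (j + j') (by omega) le_rfl
          rw [hA_end] at h1
          omega
    · rcases le_or_gt s (j + j') with hs | hs
      · rw [hb''lo t (by omega), hb''lo s hs]; omega
      · rw [hb''hi s (by omega)]
        have hCs := hC_ge s (by omega) hsm
        rcases le_or_gt (j + j') t with ht | ht
        · rw [hb''hi t ht]
          have := hCstep t s ht (by omega) hsm; omega
        · rw [hb''lo t (by omega)]; omega
  -- membership of generators of I, J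
  have hIgen : ∀ i, i ≤ m → (![a i, b i] : Mon 2) ∈ I := by
    intro i hi
    have h : (![a i, b i] : Mon 2) ∈ minGens I := by
      rw [hgens]; exact ⟨i, hi, rfl⟩
    exact h.1
  have hJgen : ∀ k, k ≤ m' → (![a' k, b' k] : Mon 2) ∈ J := by
    intro k hk
    have h : (![a' k, b' k] : Mon 2) ∈ minGens J := by
      rw [hgens']; exact ⟨k, hk, rfl⟩
    exact h.1
  have hImem : ∀ u ∈ I, ∃ i ≤ m, (![a i, b i] : Mon 2) ≤ u := by
    intro u hu
    obtain ⟨g, hg, hgu⟩ := exists_minGen hu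
    rw [hgens] at hg
    obtain ⟨i, hi, rfl⟩ := hg
    exact ⟨i, hi, hgu⟩
  have hJmem : ∀ v ∈ J, ∃ k ≤ m', (![a' k, b' k] : Mon 2) ≤ v := by
    intro v hv
    obtain ⟨g, hg, hgv⟩ := exists_minGen hv
    rw [hgens'] at hg
    obtain ⟨k, hk, rfl⟩ := hg
    exact ⟨k, hk, hgv⟩
  refine ⟨hmono'', by beta_reduce; rw [ha''hi (m + m') (by omega)]; omega,
    by beta_reduce; rw [hb''lo 0 (by omega)], ?_⟩
  -- minGens equality
  apply minGens_eq
  · -- S ⊆ P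
    rintro u ⟨t, htm, rfl⟩
    rcases le_or_gt t (j + j') with ht | ht
    · obtain ⟨i, k, hi, hk, hik, hval⟩ := infA_mem (a := a) (a' := a') ht
      refine ⟨![a i, b i], hIgen i (by omega), ![a' k, b' k], hJgen k (by omega), ?_⟩
      rw [vec_add]
      beta_reduce
      have e1 : (if t < j + j' then infA a a' j j' t else (m + m') - t) = a i + a' k := by
        rw [ha''lo t ht]; exact hval
      have e2 : (if t < j + j' then t else infC b b' j m j' m' t) = b i + b' k := by
        rw [hb''lo t ht, hbj i hi, hbj' k hk]; omega
      rw [e1, e2]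
    · obtain ⟨i, k, hji, him, hjk, hkm, hik, hval⟩ :=
        infC_mem (b := b) (b' := b') hjm hjm' (by omega) htm
      refine ⟨![a i, b i], hIgen i him, ![a' k, b' k], hJgen k hkm, ?_⟩
      rw [vec_add]
      beta_reduce
      have e1 : (if t < j + j' then infA a a' j j' t else (m + m') - t) = a i + a' k := by
        rw [ha''hi t (by omega), ha_hi i hji him, ha'_hi k hjk hkm]; omega
      have e2 : (if t < j + j' then t else infC b b' j m j' m' t) = b i + b' k := by
        rw [hb''hi t (by omega)]; exact hval
      rw [e1, e2]
  · -- coverage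
    rintro w ⟨u, hu, v, hv, rfl⟩
    obtain ⟨i, him, hiu⟩ := hImem u hu
    obtain ⟨k, hkm, hkv⟩ := hJmem v hv
    have hx : a i + a' k ≤ (u + v) 0 := by
      have h1 := hiu 0
      have h2 := hkv 0
      simp only [Matrix.cons_val_zero] at h1 h2
      simp only [Pi.add_apply]
      omega
    have hy : b i + b' k ≤ (u + v) 1 := by
      have h1 := hiu 1
      have h2 := hkv 1
      simp only [Matrix.cons_val_one, Matrix.head_cons, Matrix.cons_val_zero] at h1 h2
      simp only [Pi.add_apply]
      omega
    refine ⟨![(if i + k < j + j' then infA a a' j j' (i + k) else (m + m') - (i + k)),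
      (if i + k < j + j' then i + k else infC b b' j m j' m' (i + k))],
      ⟨i + k, by omega, rfl⟩, ?_⟩
    rw [vec_le]
    rcases le_or_gt i j with hij | hij <;> rcases le_or_gt k j' with hkj | hkj
    · -- i ≤ j, k ≤ j'
      have ht : i + k ≤ j + j' := by omega
      rw [ha''lo _ ht, hb''lo _ ht]
      have h1 : infA a a' j j' (i + k) ≤ a i + a' k := infA_le hij hkj rfl
      have h2 := hb_ge i (by omega)
      have h3 := hb'_ge k (by omega)
      constructor <;> omega
    · -- i ≤ j, j' < k
      rcases le_or_gt (i + k) (j + j') with ht | ht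
      · rw [ha''lo _ ht, hb''lo _ ht]
        have h1 : infA a a' j j' (i + k) ≤ a (i + (k - j')) + a' j' :=
          infA_le (by omega) le_rfl (by omega)
        have h2 := ha_step i (i + (k - j')) (by omega) (by omega)
        have h3 := ha'_hi j' le_rfl hjm'
        have h4 := ha'_hi k (by omega) hkm
        have h5 := hb_ge i (by omega)
        have h6 := hb'_ge k hkm
        constructor <;> omega
      · rw [ha''hi _ (by omega), hb''hi _ (by omega)]
        have h1 := ha_ge i (by omega)
        have h2 := ha'_ge k hkm
        have h3 : infC b b' j m j' m' (i + k) ≤ b j + b' (i + k - j) :=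
          infC_le le_rfl hjm (by omega) (by omega) (by omega)
        have h4 := hb'_step (i + k - j) k (by omega) hkm
        have h5 := hbj i hij
        have h6 := hbj j le_rfl
        constructor <;> omega
    · -- j < i, k ≤ j'
      rcases le_or_gt (i + k) (j + j') with ht | ht
      · rw [ha''lo _ ht, hb''lo _ ht]
        have h1 : infA a a' j j' (i + k) ≤ a j + a' (i + k - j) :=
          infA_le le_rfl (by omega) (by omega)
        have h2 := ha'_step k (i + k - j) (by omega) (by omega)
        have h3 := ha_hi j le_rfl hjm
        have h4 := ha_hi i (by omega) him
        have h5 := hb_ge i him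
        have h6 := hb'_ge k (by omega)
        constructor <;> omega
      · rw [ha''hi _ (by omega), hb''hi _ (by omega)]
        have h1 := ha_ge i him
        have h2 := ha'_ge k (by omega)
        have h3 : infC b b' j m j' m' (i + k) ≤ b (i + k - j') + b' j' :=
          infC_le (by omega) (by omega) le_rfl hjm' (by omega)
        have h4 := hb_step (i + k - j') i (by omega) him
        have h5 := hbj' k hkj
        have h6 := hbj' j' le_rfl
        constructor <;> omega
    · -- j < i, j' < k
      have ht : ¬ (i + k < j + j') := by omega
      rw [if_neg ht, if_neg ht]
      have h1 := ha_ge i him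
      have h2 := ha'_ge k hkm
      have h3 : infC b b' j m j' m' (i + k) ≤ b i + b' k :=
        infC_le (by omega) him (by omega) hkm rfl
      have h4 := ha_hi i (by omega) him
      have h5 := ha'_hi k (by omega) hkm
      constructor <;> omega
  · -- antichain
    rintro g ⟨t, htm, rfl⟩ g' ⟨s, hsm, rfl⟩ hle
    rw [vec_le_vec] at hle
    beta_reduce at hle
    rcases lt_trichotomy t s with h | h | h
    · exfalso
      have := (hmono'' t s htm hsm h).1
      omega
    · subst h; rfl
    · exfalso
      have := (hmono'' s t hsm htm h).2
      omega
end
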